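/- Let f: ℂ² → ℂ be the mixed polynomial f(x,y) = x(1 + x̄y). Then f, viewed as a smooth map ℝ⁴ → ℝ², has empty singular set: the real derivative df(x,y) has rank 2 at every point of ℂ². -/

import Mathlib

open ComplexConjugate

/-- The mixed polynomial `f(x,y) = x(1 + x̄y)`, viewed as a smooth real map
`ℝ⁴ ≅ ℂ² → ℂ ≅ ℝ²`, has empty singular set: its real derivative has rank 2 (i.e. is
surjective onto `ℂ`) at every point. -/
theorem mixed_broughton_example_no_singularities :
    ∀ z : ℂ × ℂ,
      Function.Surjective
        (fderiv ℝ (fun w : ℂ × ℂ => w.1 * (1 + conj w.1 * w.2)) z) := by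
  intro z
  obtain ⟨x, y⟩ := z
  have hc : HasFDerivAt (fun w : ℂ × ℂ => conj w.1)
      ((Complex.conjCLE.toContinuousLinearMap).comp (ContinuousLinearMap.fst ℝ ℂ ℂ)) (x, y) :=
    (Complex.conjCLE.toContinuousLinearMap.hasFDerivAt).comp (x, y) (hasFDerivAt_fst)
  have hA : HasFDerivAt (fun w : ℂ × ℂ => conj w.1 * w.2)
      (conj x • ContinuousLinearMap.snd ℝ ℂ ℂ +
        y • (Complex.conjCLE.toContinuousLinearMap).comp (ContinuousLinearMap.fst ℝ ℂ ℂ))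
      (x, y) := hc.mul (hasFDerivAt_snd)
  have hB : HasFDerivAt (fun w : ℂ × ℂ => 1 + conj w.1 * w.2)
      (conj x • ContinuousLinearMap.snd ℝ ℂ ℂ +
        y • (Complex.conjCLE.toContinuousLinearMap).comp (ContinuousLinearMap.fst ℝ ℂ ℂ))
      (x, y) := hA.const_add 1
  have hf : HasFDerivAt (fun w : ℂ × ℂ => w.1 * (1 + conj w.1 * w.2))
      (x • (conj x • ContinuousLinearMap.snd ℝ ℂ ℂ +
        y • (Complex.conjCLE.toContinuousLinearMap).comp (ContinuousLinearMap.fst ℝ ℂ ℂ)) +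
        (1 + conj x * y) • ContinuousLinearMap.fst ℝ ℂ ℂ) (x, y) :=
    (hasFDerivAt_fst).mul hB
  rw [hf.fderiv]
  intro c
  by_cases hx : x = 0
  · refine ⟨(c, 0), ?_⟩
    simp [hx]
  · refine ⟨(0, (x * conj x)⁻¹ * c), ?_⟩
    have h : x * conj x ≠ 0 := mul_ne_zero hx (by simpa using hx)
    simp only [ContinuousLinearMap.add_apply, ContinuousLinearMap.smul_apply,
      ContinuousLinearMap.coe_comp', Function.comp_apply, ContinuousLinearMap.coe_fst',
      ContinuousLinearMap.coe_snd', ContinuousLinearEquiv.coe_coe, Complex.conjCLE_apply,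
      map_zero, smul_eq_mul, mul_zero, add_zero, zero_add]
    have h' : conj x ≠ 0 := by simpa using hx
    field_simp
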